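/- Hardy–Littlewood–Pólya theorem: For x, y ∈ ℝⁿ, x is majorized by y if and only if x = Dy for some n×n doubly stochastic matrix D. -/
import Mathlib


/-- The sum of the `k` largest entries of `x`. -/
noncomputable def kLargestSum {n : ℕ} (x : Fin n → ℝ) (k : ℕ) : ℝ :=
  ∑ i ∈ Finset.univ.filter (fun i : Fin n => n - k ≤ (i : ℕ)), (x ∘ Tuple.sort x) i

/-- `x` is majorized by `y`. -/
noncomputable def Majorizes {n : ℕ} (x y : Fin n → ℝ) : Prop :=
  (∀ k, k ≤ n → kLargestSum x k ≤ kLargestSum y k) ∧ ∑ i, x i = ∑ i, y i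

open Finset


lemma card_topSet {n : ℕ} (m : ℕ) :
    (Finset.univ.filter (fun i : Fin n => m ≤ (i : ℕ))).card = n - m := by
  classical
  have := Finset.card_bij' (s := Finset.univ.filter (fun i : Fin n => m ≤ (i : ℕ)))
    (t := Finset.Ico m n) (fun i _ => (i : ℕ))
    (fun j hj => (⟨j, (Finset.mem_Ico.1 hj).2⟩ : Fin n))
    (fun a ha => Finset.mem_Ico.2 ⟨(Finset.mem_filter.1 ha).2, a.isLt⟩)
    (fun j hj => Finset.mem_filter.2 ⟨Finset.mem_univ _, (Finset.mem_Ico.1 hj).1⟩)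
    (fun a _ => rfl) (fun j _ => rfl)
  rw [this, Nat.card_Ico]

lemma sum_mul_le_topSum {n k : ℕ} (hk : k ≤ n) (w d : Fin n → ℝ) (hw : Monotone w)
    (hd0 : ∀ i, 0 ≤ d i) (hd1 : ∀ i, d i ≤ 1) (hdsum : ∑ i, d i = k) :
    ∑ i, d i * w i ≤ ∑ i ∈ Finset.univ.filter (fun i : Fin n => n - k ≤ (i : ℕ)), w i := by
  classical
  rcases Nat.eq_zero_or_pos k with rfl | hk1
  · have hd : ∀ i ∈ Finset.univ, d i = 0 := by
      intro i _
      have := (Finset.sum_eq_zero_iff_of_nonneg (fun i _ => hd0 i)).1 (by simpa using hdsum)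
      exact this i (Finset.mem_univ i)
    have h1 : ∑ i, d i * w i = 0 := Finset.sum_eq_zero fun i hi => by rw [hd i hi, zero_mul]
    have h2 : (Finset.univ.filter (fun i : Fin n => n - 0 ≤ (i : ℕ))) = ∅ := by
      apply Finset.filter_false_of_mem
      intro i _; simpa using i.isLt.not_ge
    rw [h1, h2]; simp
  · have hnk : n - k < n := by omega
    set t := w ⟨n - k, hnk⟩ with ht
    have hcard : (Finset.univ.filter (fun i : Fin n => n - k ≤ (i : ℕ))).card = k := by
      rw [card_topSet, Nat.sub_sub_self hk]
    have key : ∀ i, d i * (w i - t) ≤ if n - k ≤ (i : ℕ) then w i - t else 0 := by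
      intro i
      split_ifs with h
      · have hti : t ≤ w i := hw (show (⟨n - k, hnk⟩ : Fin n) ≤ i from Fin.le_def.2 (show n - k ≤ (i:ℕ) from h))
        nlinarith [hd0 i, hd1 i]
      · have hti : w i ≤ t := hw (show i ≤ (⟨n - k, hnk⟩ : Fin n) from Fin.le_def.2 (show (i:ℕ) ≤ n - k by omega))
        nlinarith [hd0 i]
    have h1 : ∑ i, d i * (w i - t) ≤
        ∑ i ∈ Finset.univ.filter (fun i : Fin n => n - k ≤ (i : ℕ)), (w i - t) := by
      rw [Finset.sum_filter]
      exact Finset.sum_le_sum fun i _ => key i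
    have h2 : ∑ i ∈ Finset.univ.filter (fun i : Fin n => n - k ≤ (i : ℕ)), (w i - t)
        = (∑ i ∈ Finset.univ.filter (fun i : Fin n => n - k ≤ (i : ℕ)), w i) - k * t := by
      rw [Finset.sum_sub_distrib, Finset.sum_const, hcard]; ring_nf
    have h3 : ∑ i, d i * w i = (∑ i, d i * (w i - t)) + k * t := by
      rw [← hdsum, Finset.sum_mul, ← Finset.sum_add_distrib]
      exact Finset.sum_congr rfl fun i _ => by ring
    linarith


lemma abel_nonpos {n : ℕ} (U V : ℕ → ℝ) (hU : ∀ i, i + 1 < n → U i ≤ U (i + 1))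
    (hV : ∀ m, m ≤ n → 0 ≤ ∑ j ∈ Finset.range m, V j) (hV0 : ∑ j ∈ Finset.range n, V j = 0) :
    ∑ i ∈ Finset.range n, U i * V i ≤ 0 := by
  have habel := Finset.sum_range_by_parts U V n
  simp only [smul_eq_mul] at habel
  rw [habel, hV0, mul_zero, zero_sub, neg_nonpos]
  apply Finset.sum_nonneg
  intro i hi
  rw [Finset.mem_range] at hi
  have h1 : U i ≤ U (i + 1) := hU i (by omega)
  have h2 : 0 ≤ ∑ j ∈ Finset.range (i + 1), V j := hV (i + 1) (by omega)
  nlinarith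

lemma sorted_dot_le {n : ℕ} (u wx wy : Fin n → ℝ) (hu : Monotone u)
    (hbot : ∀ m, m ≤ n →
      ∑ i ∈ Finset.univ.filter (fun i : Fin n => (i : ℕ) < m), wy i ≤
      ∑ i ∈ Finset.univ.filter (fun i : Fin n => (i : ℕ) < m), wx i)
    (htot : ∑ i, wx i = ∑ i, wy i) :
    ∑ i, u i * wx i ≤ ∑ i, u i * wy i := by
  classical
  set U : ℕ → ℝ := fun i => if h : i < n then u ⟨i, h⟩ else 0 with hUdef
  set V : ℕ → ℝ := fun i => if h : i < n then wx ⟨i, h⟩ - wy ⟨i, h⟩ else 0 with hVdef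
  have hpartial : ∀ m, m ≤ n → ∑ j ∈ Finset.range m, V j =
      ∑ i ∈ Finset.univ.filter (fun i : Fin n => (i : ℕ) < m), (wx i - wy i) := by
    intro m hm
    have e1 : ∑ j ∈ Finset.range m, V j = ∑ j ∈ Finset.range n, if j < m then V j else 0 := by
      rw [← Finset.sum_subset (Finset.range_subset_range.2 hm)
        (fun j _ hj => if_neg (fun h => hj (Finset.mem_range.2 h)))]
      exact Finset.sum_congr rfl fun j hj => (if_pos (Finset.mem_range.1 hj)).symm
    rw [e1, ← Fin.sum_univ_eq_sum_range (fun j => if j < m then V j else 0) n,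
      Finset.sum_filter]
    apply Finset.sum_congr rfl
    intro i _
    by_cases h : (i : ℕ) < m
    · rw [if_pos h, if_pos h, hVdef]
      simp [i.isLt]
    · rw [if_neg h, if_neg h]
  have key : ∑ i ∈ Finset.range n, U i * V i ≤ 0 := by
    apply abel_nonpos
    · intro i hi
      have h1 : i < n := by omega
      rw [hUdef]
      simp only [dif_pos h1, dif_pos hi]
      exact hu (Fin.le_def.2 (by simp))
    · intro m hm
      rw [hpartial m hm, Finset.sum_sub_distrib, sub_nonneg]
      exact hbot m hm
    · rw [hpartial n le_rfl]
      have : Finset.univ.filter (fun i : Fin n => (i : ℕ) < n) = Finset.univ := by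
        apply Finset.filter_true_of_mem; intro i _; exact i.isLt
      rw [this, Finset.sum_sub_distrib, htot, sub_self]
  have e2 : ∑ i ∈ Finset.range n, U i * V i = ∑ i, u i * (wx i - wy i) := by
    rw [← Fin.sum_univ_eq_sum_range (fun j => U j * V j) n]
    apply Finset.sum_congr rfl
    intro i _
    rw [hUdef, hVdef]
    simp [i.isLt]
  rw [e2] at key
  have : ∑ i, u i * (wx i - wy i) = ∑ i, u i * wx i - ∑ i, u i * wy i := by
    rw [← Finset.sum_sub_distrib]
    exact Finset.sum_congr rfl fun i _ => by ring
  linarith [this ▸ key]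

lemma permMatrix_mulVec {n : ℕ} (π : Equiv.Perm (Fin n)) (y : Fin n → ℝ) :
    (π.permMatrix ℝ).mulVec y = y ∘ π := by
  ext i
  simp [Matrix.mulVec, dotProduct, Equiv.Perm.permMatrix, PEquiv.toMatrix_apply,
    Equiv.toPEquiv_apply, ite_mul]

lemma mulVec_sum_eq {n : ℕ} {D : Matrix (Fin n) (Fin n) ℝ}
    (hD : D ∈ doublyStochastic ℝ (Fin n)) (y : Fin n → ℝ) :
    ∑ i, D.mulVec y i = ∑ j, y j := by
  simp only [Matrix.mulVec, dotProduct]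
  rw [Finset.sum_comm]
  refine Finset.sum_congr rfl fun j _ => ?_
  rw [← Finset.sum_mul, sum_col_of_mem_doublyStochastic hD j, one_mul]

-- backward direction

lemma bot_sums {n : ℕ} (x y : Fin n → ℝ) (hmaj : Majorizes x y) :
    ∀ m, m ≤ n →
      ∑ i ∈ Finset.univ.filter (fun i : Fin n => (i : ℕ) < m), (y ∘ Tuple.sort y) i ≤
      ∑ i ∈ Finset.univ.filter (fun i : Fin n => (i : ℕ) < m), (x ∘ Tuple.sort x) i := by
  intro m hm
  have htop := hmaj.1 (n - m) (Nat.sub_le n m)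
  unfold kLargestSum at htop
  rw [Nat.sub_sub_self hm] at htop
  have splitx := Finset.sum_filter_add_sum_filter_not Finset.univ
    (fun i : Fin n => m ≤ (i : ℕ)) (x ∘ Tuple.sort x)
  have splity := Finset.sum_filter_add_sum_filter_not Finset.univ
    (fun i : Fin n => m ≤ (i : ℕ)) (y ∘ Tuple.sort y)
  have enot : (Finset.univ.filter (fun i : Fin n => ¬ m ≤ (i : ℕ)))
      = Finset.univ.filter (fun i : Fin n => (i : ℕ) < m) := by
    apply Finset.filter_congr; intro i _; simp [not_le]
  rw [enot] at splitx splity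
  have htotx : ∑ i, (x ∘ Tuple.sort x) i = ∑ i, x i := Equiv.sum_comp (Tuple.sort x) x
  have htoty : ∑ i, (y ∘ Tuple.sort y) i = ∑ i, y i := Equiv.sum_comp (Tuple.sort y) y
  have := hmaj.2
  linarith

lemma hlp_backward (n : ℕ) (y : Fin n → ℝ) (D : Matrix (Fin n) (Fin n) ℝ)
    (hD : D ∈ doublyStochastic ℝ (Fin n)) : Majorizes (D.mulVec y) y := by
  classical
  constructor
  · intro k hk
    set z := D.mulVec y with hz
    set σ := Tuple.sort z with hσ
    set T := Finset.univ.filter (fun i : Fin n => n - k ≤ (i : ℕ)) with hT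
    set S : Finset (Fin n) := T.image σ with hS
    have hSsum : kLargestSum z k = ∑ i ∈ S, z i := by
      rw [hS, Finset.sum_image (fun a _ b _ h => σ.injective h)]
      rfl
    have hScard : S.card = k := by
      rw [hS, Finset.card_image_of_injective _ σ.injective, hT, card_topSet,
        Nat.sub_sub_self hk]
    set c : Fin n → ℝ := fun j => ∑ i ∈ S, D i j with hc
    have hexp : ∑ i ∈ S, z i = ∑ j, c j * y j := by
      simp only [hz, Matrix.mulVec, dotProduct]
      rw [Finset.sum_comm]
      exact Finset.sum_congr rfl fun j _ => by rw [hc, Finset.sum_mul]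
    have hc0 : ∀ j, 0 ≤ c j := fun j =>
      Finset.sum_nonneg fun i _ => nonneg_of_mem_doublyStochastic hD
    have hc1 : ∀ j, c j ≤ 1 := by
      intro j
      calc c j ≤ ∑ i, D i j := Finset.sum_le_sum_of_subset_of_nonneg (Finset.subset_univ S)
            (fun i _ _ => nonneg_of_mem_doublyStochastic hD)
        _ = 1 := sum_col_of_mem_doublyStochastic hD j
    have hcsum : ∑ j, c j = k := by
      rw [hc, Finset.sum_comm]
      rw [Finset.sum_congr rfl fun i (_ : i ∈ S) => sum_row_of_mem_doublyStochastic hD i]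
      rw [Finset.sum_const, hScard, nsmul_eq_mul, mul_one]
    have key := sum_mul_le_topSum hk (y ∘ Tuple.sort y) (c ∘ Tuple.sort y)
      (Tuple.monotone_sort y) (fun i => hc0 _) (fun i => hc1 _)
      (by rw [← hcsum]; exact Equiv.sum_comp (Tuple.sort y) c)
    have e : ∑ i, (c ∘ Tuple.sort y) i * (y ∘ Tuple.sort y) i = ∑ j, c j * y j :=
      Equiv.sum_comp (Tuple.sort y) (fun j => c j * y j)
    rw [hSsum, hexp, ← e]
    exact key
  · exact mulVec_sum_eq hD y

lemma hlp_forward (n : ℕ) (x y : Fin n → ℝ) (hmaj : Majorizes x y) :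
    ∃ D ∈ doublyStochastic ℝ (Fin n), x = D.mulVec y := by
  classical
  set L : Matrix (Fin n) (Fin n) ℝ →ₗ[ℝ] (Fin n → ℝ) :=
    { toFun := fun D => D.mulVec y
      map_add' := fun A B => Matrix.add_mulVec A B y
      map_smul' := fun a A => by simp [Matrix.smul_mulVec] } with hL
  set Sset : Set (Fin n → ℝ) := L '' (doublyStochastic ℝ (Fin n)) with hSset
  suffices hx : x ∈ Sset by
    obtain ⟨D, hD, hDx⟩ := hx
    exact ⟨D, hD, hDx.symm⟩
  by_contra hx
  have hconv : Convex ℝ Sset := (convex_doublyStochastic (R := ℝ) (n := Fin n)).linear_image L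
  have hcompact : IsCompact (doublyStochastic ℝ (Fin n) : Set (Matrix (Fin n) (Fin n) ℝ)) := by
    rw [doublyStochastic_eq_convexHull_permMatrix]
    apply Set.Finite.isCompact_convexHull
    exact Set.finite_range (fun σ : Equiv.Perm (Fin n) => σ.permMatrix ℝ)
  have hclosed : IsClosed Sset :=
    (hcompact.image L.continuous_of_finiteDimensional).isClosed
  obtain ⟨f, u0, hfa, hux⟩ := geometric_hahn_banach_closed_point hconv hclosed hx
  set c : Fin n → ℝ := fun j => f (fun i => if j = i then 1 else 0) with hcdef
  have hf : ∀ v : Fin n → ℝ, f v = ∑ j, c j * v j := by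
    intro v
    conv_lhs => rw [pi_eq_sum_univ v]
    rw [map_sum]
    refine Finset.sum_congr rfl fun j _ => ?_
    rw [map_smul, smul_eq_mul, hcdef, mul_comm]
  set τ := Tuple.sort c with hτ
  set σx := Tuple.sort x with hσx
  set σy := Tuple.sort y with hσy
  have humono : Monotone (c ∘ τ) := Tuple.monotone_sort c
  have hwx : Monotone (x ∘ σx) := Tuple.monotone_sort x
  have step1 : ∑ j, c j * x j ≤ ∑ i, (c ∘ τ) i * (x ∘ σx) i := by
    have mono : Monovary (c ∘ τ) (x ∘ σx) := by
      intro i j hij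
      refine humono (le_of_not_gt fun h => absurd hij (not_lt.2 (hwx h.le)))
    have e : ∑ j, c j * x j = ∑ i, (c ∘ τ) i * (x ∘ σx) ((τ.trans σx.symm) i) := by
      rw [← Equiv.sum_comp τ (fun j => c j * x j)]
      refine Finset.sum_congr rfl fun i _ => ?_
      simp [Function.comp, Equiv.trans_apply]
    rw [e]
    exact mono.sum_mul_comp_perm_le_sum_mul (σ := τ.trans σx.symm)
  have step2 : ∑ i, (c ∘ τ) i * (x ∘ σx) i ≤ ∑ i, (c ∘ τ) i * (y ∘ σy) i := by
    apply sorted_dot_le _ _ _ humono (bot_sums x y hmaj)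
    exact (Equiv.sum_comp σx x).trans (hmaj.2.trans (Equiv.sum_comp σy y).symm)
  set π : Equiv.Perm (Fin n) := τ.symm.trans σy with hπ
  have step3 : ∑ i, (c ∘ τ) i * (y ∘ σy) i = ∑ j, c j * (y ∘ π) j := by
    rw [← Equiv.sum_comp τ.symm (fun i => (c ∘ τ) i * (y ∘ σy) i)]
    refine Finset.sum_congr rfl fun j _ => ?_
    simp only [Function.comp_apply, Equiv.trans_apply, Equiv.apply_symm_apply, hπ]
  have hπS : (y ∘ π) ∈ Sset := ⟨π.permMatrix ℝ, permMatrix_mem_doublyStochastic,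
    permMatrix_mulVec π y⟩
  have h1 := hfa _ hπS
  rw [hf (y ∘ π)] at h1
  rw [hf x] at hux
  linarith

theorem hardy_littlewood_polya (n : ℕ) (x y : Fin n → ℝ) :
    Majorizes x y ↔ ∃ D ∈ doublyStochastic ℝ (Fin n), x = D.mulVec y := by
  constructor
  · exact hlp_forward n x y
  · rintro ⟨D, hD, rfl⟩
    exact hlp_backward n y D hD
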